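/- If h ∈ GL(V) is a reflection on a finite-dimensional vector space V over a field F, then either h is diagonalizable with order coprime to char F, or h is nondiagonalizable with order equal to char F. -/

import Mathlib

/-- A linear endomorphism is diagonalizable if there is a basis of eigenvectors. -/
def IsDiagonalizable {F V : Type*} [Field F] [AddCommGroup V] [Module F V]
    (f : V →ₗ[F] V) : Prop :=
  ∃ (ι : Type) (b : Module.Basis ι F V), ∀ i, ∃ c : F, f (b i) = c • b i

/-- A reflection of finite order is either diagonalizable with order coprime to `char F`
(i.e. not divisible by it), or nondiagonalizable with order equal to `char F`. -/
theorem stmt2 {F V : Type*} [Field F] [AddCommGroup V] [Module F V]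
    [FiniteDimensional F V] (h : V ≃ₗ[F] V) (m : ℕ) (hm : 0 < m) (hpow : h ^ m = 1)
    (hrefl : Module.finrank F (V ⧸ LinearMap.ker (1 - (h : V →ₗ[F] V))) = 1) :
    (IsDiagonalizable (h : V →ₗ[F] V) ∧ ¬ (ringChar F ∣ orderOf h)) ∨
      (¬ IsDiagonalizable (h : V →ₗ[F] V) ∧ orderOf h = ringChar F) := by
  classical
  set W : Submodule F V := LinearMap.ker (1 - (h : V →ₗ[F] V)) with hWdef
  have hone : ∀ x : V, (1 : V ≃ₗ[F] V) x = x := fun _ => rfl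
  have memW : ∀ x : V, x ∈ W ↔ h x = x := by
    intro x
    rw [hWdef, LinearMap.mem_ker]
    constructor
    · intro hx
      have hx' : x - h x = 0 := by simpa using hx
      exact (sub_eq_zero.mp hx').symm
    · intro hx
      simp [hx]
  have hford : IsOfFinOrder h := isOfFinOrder_iff_pow_eq_one.mpr ⟨m, hm, hpow⟩
  -- powers fix W pointwise
  have hfixpow : ∀ (k : ℕ) (w : V), w ∈ W → (h ^ k) w = w := by
    intro k
    induction k with
    | zero => intro w _; simp
    | succ k ih =>
      intro w hw
      rw [pow_succ']
      show h ((h ^ k) w) = w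
      rw [ih w hw]
      exact (memW w).mp hw
  -- pick v ∉ W
  have hWne : W ≠ ⊤ := by
    intro htop
    have h2 := Submodule.finrank_quotient_add_finrank W
    rw [hrefl, htop, finrank_top] at h2
    omega
  obtain ⟨v, hv⟩ : ∃ v : V, v ∉ W := by
    by_contra hcon
    push_neg at hcon
    exact hWne (Submodule.eq_top_iff'.mpr hcon)
  have hπv : (W.mkQ v : V ⧸ W) ≠ 0 := fun h0 => hv ((Submodule.Quotient.mk_eq_zero W).mp h0)
  have hspan : Submodule.span F {W.mkQ v} = (⊤ : Submodule F (V ⧸ W)) :=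
    Submodule.eq_top_of_finrank_eq (by rw [finrank_span_singleton hπv, hrefl])
  -- get the scalar c with h v - c • v ∈ W
  obtain ⟨c, hc⟩ : ∃ c : F, h v - c • v ∈ W := by
    have hmem : W.mkQ (h v) ∈ Submodule.span F {W.mkQ v} := hspan ▸ Submodule.mem_top
    obtain ⟨c, hc⟩ := Submodule.mem_span_singleton.mp hmem
    refine ⟨c, ?_⟩
    rw [← Submodule.Quotient.mk_eq_zero, ← Submodule.mkQ_apply, map_sub, map_smul, hc, sub_self]
  -- sup with span of any vector not in W is everything
  have hsup : ∀ u : V, u ∉ W → W ⊔ Submodule.span F {u} = ⊤ := by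
    intro u hu
    have hune : u ≠ 0 := by rintro rfl; exact hu W.zero_mem
    have hdisj : Disjoint W (Submodule.span F {u}) :=
      (Submodule.disjoint_span_singleton' hune).mpr hu
    apply Submodule.eq_top_of_finrank_eq
    have h1 := Submodule.finrank_sup_add_finrank_inf_eq W (Submodule.span F {u})
    rw [hdisj.eq_bot, finrank_bot, finrank_span_singleton hune] at h1
    have h2 := Submodule.finrank_quotient_add_finrank W
    rw [hrefl] at h2
    omega
  by_cases hc1 : c = 1
  · -- nondiagonalizable case
    right
    subst hc1
    rw [one_smul] at hc
    set w0 : V := h v - v with hw0def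
    have hw0 : w0 ≠ 0 := by
      intro h0
      exact hv ((memW v).mpr (by rwa [← sub_eq_zero]))
    -- h x - x ∈ W for all x
    have hsubW : ∀ x : V, h x - x ∈ W := by
      intro x
      have hx : x ∈ W ⊔ Submodule.span F {v} := (hsup v hv).symm ▸ Submodule.mem_top
      obtain ⟨w, hw, u, hu, rfl⟩ := Submodule.mem_sup.mp hx
      obtain ⟨a, rfl⟩ := Submodule.mem_span_singleton.mp hu
      have heq : h (w + a • v) - (w + a • v) = a • w0 := by
        rw [map_add, map_smul, (memW w).mp hw, hw0def, smul_sub]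
        abel
      rw [heq]
      exact W.smul_mem a hc
    -- power formula
    have hpowv : ∀ k : ℕ, (h ^ k) v = v + (k : F) • w0 := by
      intro k
      induction k with
      | zero => simp
      | succ k ih =>
        rw [pow_succ']
        show h ((h ^ k) v) = v + ((k + 1 : ℕ) : F) • w0
        have hv1 : h v = v + w0 := by rw [hw0def]; abel
        rw [ih, map_add, map_smul, (memW w0).mp hc, hv1]
        push_cast
        rw [add_smul, one_smul]
        abel
    have hiff : ∀ k : ℕ, h ^ k = 1 ↔ (k : F) = 0 := by
      intro k
      constructor
      · intro hk
        have heq := hpowv k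
        rw [hk, hone] at heq
        have hz : (k : F) • w0 = 0 := by
          have heq' := heq.symm
          rwa [add_eq_left] at heq'
        rcases smul_eq_zero.mp hz with h' | h'
        · exact h'
        · exact absurd h' hw0
      · intro hk
        ext x
        have hx : x ∈ W ⊔ Submodule.span F {v} := (hsup v hv).symm ▸ Submodule.mem_top
        obtain ⟨w, hw, u, hu, rfl⟩ := Submodule.mem_sup.mp hx
        obtain ⟨a, rfl⟩ := Submodule.mem_span_singleton.mp hu
        show (h ^ k) (w + a • v) = w + a • v
        rw [map_add, map_smul, hfixpow k w hw, hpowv k, hk, zero_smul, add_zero]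
    -- characteristic
    set p := ringChar F with hpdef
    have hmF : (m : F) = 0 := (hiff m).mp hpow
    have hpm : p ∣ m := (ringChar.spec F m).mp hmF
    have hp0 : p ≠ 0 := by
      rintro h0
      rw [h0] at hpm
      omega
    have hp : p.Prime := (CharP.char_is_prime_or_zero F p).resolve_right hp0
    haveI : Fact p.Prime := ⟨hp⟩
    have hne1 : h ≠ 1 := by
      intro h1
      have hpow1 : h ^ 1 = 1 := by rwa [pow_one]
      have := (hiff 1).mp hpow1
      simp at this
    haveI : CharP F p := ringChar.charP F
    have hhp : h ^ p = 1 := (hiff p).mpr (CharP.cast_eq_zero F p)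
    have hord : orderOf h = p := orderOf_eq_prime hhp hne1
    refine ⟨?_, hord⟩
    -- nondiagonalizable
    rintro ⟨ι, b, hb⟩
    have hbfix : ∀ i, h (b i) = b i := by
      intro i
      obtain ⟨ci, hci⟩ := hb i
      rw [LinearEquiv.coe_coe] at hci
      have hmem : (ci - 1) • b i ∈ W := by
        have heq : h (b i) - b i = (ci - 1) • b i := by rw [hci, sub_smul, one_smul]
        rw [← heq]; exact hsubW (b i)
      have heq2 := (memW _).mp hmem
      rw [map_smul, hci, smul_smul] at heq2
      have hz : ((ci - 1) * ci - (ci - 1)) • b i = 0 := by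
        rw [sub_smul, heq2, sub_self]
      rcases smul_eq_zero.mp hz with h' | h'
      · have h2 : (ci - 1) * (ci - 1) = 0 := by linear_combination h'
        have hci1 : ci = 1 := by
          rcases mul_eq_zero.mp h2 with h'' | h'' <;>
            · rw [sub_eq_zero] at h''; exact h''
        rw [hci, hci1, one_smul]
      · exact absurd h' (b.ne_zero i)
    exfalso
    apply hne1
    ext x
    have hid : (h : V →ₗ[F] V) = LinearMap.id := b.ext fun i => by simpa using hbfix i
    show (h : V →ₗ[F] V) x = x
    rw [hid]; rfl
  · -- diagonalizable case
    left
    set w1 : V := h v - c • v with hw1def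
    set v' : V := v + (c - 1)⁻¹ • w1 with hv'def
    have hcne : c - 1 ≠ 0 := sub_ne_zero.mpr hc1
    have hv'W : v' ∉ W := by
      intro hmem
      have hvW : v' - (c - 1)⁻¹ • w1 ∈ W := W.sub_mem hmem (W.smul_mem _ hc)
      rw [hv'def] at hvW
      simp only [add_sub_cancel_right] at hvW
      exact hv hvW
    have hv'ne : v' ≠ 0 := by rintro h0; rw [h0] at hv'W; exact hv'W W.zero_mem
    have hcoef : (1 : F) + (c - 1)⁻¹ = c * (c - 1)⁻¹ := by
      field_simp
      ring
    have hhv' : h v' = c • v' := by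
      rw [hv'def, map_add, map_smul, (memW w1).mp hc]
      have hv1 : h v = c • v + w1 := by rw [hw1def]; abel
      rw [hv1, smul_add, smul_smul, ← hcoef, add_smul, one_smul]
      abel
    have hpowv' : ∀ k : ℕ, (h ^ k) v' = c ^ k • v' := by
      intro k
      induction k with
      | zero => simp
      | succ k ih =>
        rw [pow_succ']
        show h ((h ^ k) v') = c ^ (k + 1) • v'
        rw [ih, map_smul, hhv', smul_smul, pow_succ]
    have hiff : ∀ k : ℕ, h ^ k = 1 ↔ c ^ k = 1 := by
      intro k
      constructor
      · intro hk
        have heq := hpowv' k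
        rw [hk, hone] at heq
        have h1 : (c ^ k - 1) • v' = 0 := by rw [sub_smul, one_smul, ← heq, sub_self]
        rcases smul_eq_zero.mp h1 with h' | h'
        · rwa [sub_eq_zero] at h'
        · exact absurd h' hv'ne
      · intro hk
        ext x
        have hx : x ∈ W ⊔ Submodule.span F {v'} := (hsup v' hv'W).symm ▸ Submodule.mem_top
        obtain ⟨w, hw, u, hu, rfl⟩ := Submodule.mem_sup.mp hx
        obtain ⟨a, rfl⟩ := Submodule.mem_span_singleton.mp hu
        show (h ^ k) (w + a • v') = w + a • v'
        rw [map_add, map_smul, hfixpow k w hw, hpowv' k, hk, one_smul]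
    constructor
    · -- diagonalizable
      set K : Submodule F V := Submodule.span F {v'} with hKdef
      have hdisj : Disjoint W K := (Submodule.disjoint_span_singleton' hv'ne).mpr hv'W
      have hcompl : IsCompl W K := ⟨hdisj, codisjoint_iff.mpr (hsup v' hv'W)⟩
      set e : (W × K) ≃ₗ[F] V := Submodule.prodEquivOfIsCompl W K hcompl with hedef
      set bW : Module.Basis (Fin (Module.finrank F W)) F W := Module.finBasis F W with hbWdef
      set bK : Module.Basis (Fin (Module.finrank F K)) F K := Module.finBasis F K with hbKdef
      refine ⟨Fin (Module.finrank F W) ⊕ Fin (Module.finrank F K), (bW.prod bK).map e, ?_⟩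
      rintro (i | i)
      · refine ⟨1, ?_⟩
        have hval : ((bW.prod bK).map e) (Sum.inl i) = (bW i : V) := by
          simp [Module.Basis.map_apply, Module.Basis.prod_apply, hedef,
            Submodule.coe_prodEquivOfIsCompl']
        rw [hval, LinearEquiv.coe_coe, (memW _).mp (bW i).2, one_smul]
      · have hmem : ((bK i : V)) ∈ K := (bK i).2
        obtain ⟨a, ha⟩ := Submodule.mem_span_singleton.mp hmem
        refine ⟨c, ?_⟩
        have hval : ((bW.prod bK).map e) (Sum.inr i) = (bK i : V) := by
          simp [Module.Basis.map_apply, Module.Basis.prod_apply, hedef,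
            Submodule.coe_prodEquivOfIsCompl']
        rw [hval, LinearEquiv.coe_coe, ← ha, map_smul, hhv', smul_comm]
    · -- order not divisible by char
      set p := ringChar F with hpdef
      intro hdvd
      set d := orderOf h with hddef
      have hd0 : 0 < d := hford.orderOf_pos
      rcases Nat.eq_zero_or_pos p with hp0 | hppos
      · rw [hp0] at hdvd; omega
      have hp : p.Prime := (CharP.char_is_prime_or_zero F p).resolve_right (by omega)
      haveI : Fact p.Prime := ⟨hp⟩
      haveI : CharP F p := ringChar.charP F
      obtain ⟨k, hk⟩ := hdvd
      have hk0 : 0 < k := by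
        rcases Nat.eq_zero_or_pos k with rfl | h'
        · rw [Nat.mul_zero] at hk; omega
        · exact h'
      have hkd : k < d := by nlinarith [hp.two_le]
      have hcd : c ^ d = 1 := (hiff d).mp (pow_orderOf_eq_one h)
      have hckp : (c ^ k) ^ p = 1 := by
        rw [← pow_mul, mul_comm, ← hk, hcd]
      have hck : c ^ k = 1 := by
        apply frobenius_inj F p
        rw [frobenius_def, frobenius_def, hckp, one_pow]
      have hk1 : h ^ k = 1 := (hiff k).mpr hck
      have hdk : d ∣ k := orderOf_dvd_of_pow_eq_one hk1
      have := Nat.le_of_dvd hk0 hdk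
      omega
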